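/- The Eulerian numbers A_{k,i} of Stirling permutations satisfy the recurrence A_{k,i} = i · A_{k∖k_n, i} + (k_1 + ... + k_{n-1} + 2 - i) · A_{k∖k_n, i-1}, with A_{(k),1} = 1 and A_{k,i} = 0 if i = 0 or i > n. -/

import Mathlib

open Finset

/-- The multiset {1^{k 0}, 2^{k 1}, ..., n^{k (n-1)}}. -/
def multisetOf (k : ℕ → ℕ) (n : ℕ) : Multiset ℕ :=
  ∑ i ∈ Finset.range n, Multiset.replicate (k i) (i + 1)

/-- A word is a Stirling permutation: between two equal letters, all letters are ≥. -/
def IsStirlingPerm (w : List ℕ) : Prop :=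
  ∀ i s j : ℕ, i < s → s < j → j < w.length →
    w.getD i 0 = w.getD j 0 → w.getD i 0 ≤ w.getD s 0

/-- Number of descents of a word: indices i (0-based, i < K-1) with w i > w (i+1),
together with the last index. -/
def descents (w : List ℕ) : ℕ :=
  ((Finset.range (w.length - 1)).filter fun i => w.getD (i + 1) 0 < w.getD i 0).card + 1

/-- Eulerian numbers A_{k,i}: number of Stirling permutations of {1^{k_1},...,n^{k_n}}
with exactly i descents. -/
noncomputable def eulerianA (k : ℕ → ℕ) (n i : ℕ) : ℕ :=
  Nat.card {w : List ℕ //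
    (↑w : Multiset ℕ) = multisetOf k n ∧ IsStirlingPerm w ∧ descents w = i}

/-- K = k_1 + ... + k_n. -/
def bigK (k : ℕ → ℕ) (n : ℕ) : ℕ := ∑ i ∈ Finset.range n, k i

/-- B_k(m): the coefficient of x^m in (∑_{i=1}^n A_{k,i} x^i)/(1-x)^{K+1}. -/
noncomputable def Bpoly (k : ℕ → ℕ) (n m : ℕ) : ℕ :=
  ∑ i ∈ Finset.Icc 1 n, eulerianA k n i * Nat.choose (bigK k n + m - i) (bigK k n)

/-- b_k(m): the coefficient of x^m in (∑_{i=K-n+1}^{K} A_{k,K+1-i} x^i)/(1-x)^{K+1}. -/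
noncomputable def bpoly (k : ℕ → ℕ) (n m : ℕ) : ℕ :=
  ∑ i ∈ Finset.Icc (bigK k n - n + 1) (bigK k n),
    eulerianA k n (bigK k n + 1 - i) * Nat.choose (bigK k n + m - i) (bigK k n)

open List

namespace SP

def d : List ℕ → ℕ
  | [] => 0
  | [_] => 0
  | x :: y :: t => (if y < x then 1 else 0) + d (y :: t)

lemma filter_card (w : List ℕ) :
    ((Finset.range (w.length - 1)).filter fun i => w.getD (i + 1) 0 < w.getD i 0).card = d w := by
  induction w with
  | nil => simp [d]
  | cons x t ih =>
    cases t with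
    | nil => simp [d]
    | cons y t' =>
      rw [Finset.card_filter] at ih ⊢
      have hl : (x :: y :: t').length - 1 = t'.length + 1 := by simp
      rw [hl, Finset.sum_range_succ']
      simp only [List.getD_cons_succ]
      have hl2 : (y :: t').length - 1 = t'.length := by simp
      rw [hl2] at ih
      simp only [List.getD_cons_succ] at ih
      rw [ih, d]
      simp [List.getD_cons_zero, add_comm]

lemma descents_eq_d (w : List ℕ) : descents w = d w + 1 := by
  rw [descents, filter_card]

def glue (a b : List ℕ) : ℕ :=
  if b.headD 0 < a.getLastD 0 ∧ a ≠ [] ∧ b ≠ [] then 1 else 0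

lemma glue_nil_left (b : List ℕ) : glue [] b = 0 := by simp [glue]

lemma glue_nil_right (a : List ℕ) : glue a [] = 0 := by simp [glue]

lemma glue_cons_cons (x x' : ℕ) (t b : List ℕ) :
    glue (x :: x' :: t) b = glue (x' :: t) b := by
  simp [glue, List.getLastD_cons]

lemma glue_cases (a b : List ℕ) : glue a b = 0 ∨ glue a b = 1 := by
  unfold glue; split <;> simp

lemma glue_eq (a : List ℕ) (hane : a ≠ []) (y : ℕ) (b' : List ℕ) :
    glue a (y :: b') = if y < a.getLast hane then 1 else 0 := by
  unfold glue
  rw [List.getLastD_eq_getLast?, List.getLast?_eq_getLast hane]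
  simp [hane]

lemma d_append (a b : List ℕ) : d (a ++ b) = d a + glue a b + d b := by
  induction a with
  | nil => simp [d, glue_nil_left]
  | cons x t ih =>
    cases t with
    | nil =>
      cases b with
      | nil => simp [d, glue_nil_right]
      | cons y b' => simp [d, glue]
    | cons x' t' =>
      have : (x :: x' :: t') ++ b = x :: ((x' :: t') ++ b) := by simp
      rw [this]
      have h2 : (x' :: t') ++ b = x' :: (t' ++ b) := by simp
      rw [h2, d, ← h2, ih, glue_cons_cons, d]
      ring

lemma d_replicate (c x : ℕ) : d (List.replicate c x) = 0 := by
  induction c with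
  | zero => simp [d]
  | succ c ih =>
    cases c with
    | zero => simp [d]
    | succ c' =>
      rw [List.replicate_succ, List.replicate_succ, d, ← List.replicate_succ, ih]
      simp

lemma head?_replicate_append (c n : ℕ) (b : List ℕ) (hc : 1 ≤ c) :
    (List.replicate c n ++ b).head? = some n := by
  cases c with
  | zero => omega
  | succ c => rw [List.replicate_succ]; rfl

lemma glue_left_small (a b : List ℕ) (n : ℕ) (ha : ∀ z ∈ a, z < n)
    (hy : b.head? = some n) : glue a b = 0 := by
  unfold glue
  rw [if_neg]
  rintro ⟨h1, h2, h3⟩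
  cases a with
  | nil => exact h2 rfl
  | cons z a' =>
    have hlast : (z :: a').getLast (by simp) ∈ z :: a' := List.getLast_mem _
    have := ha _ hlast
    rw [List.headD_eq_head?_getD, hy] at h1
    rw [List.getLastD_eq_getLast?, List.getLast?_eq_getLast (by simp)] at h1
    simp at h1
    omega

lemma glue_replicate_left (c n : ℕ) (b : List ℕ) (hc : 1 ≤ c) (hb : ∀ x ∈ b, x < n) :
    glue (List.replicate c n) b = if b = [] then 0 else 1 := by
  cases b with
  | nil => simp [glue_nil_right]
  | cons y b' =>
    have hrep : (List.replicate c n) ≠ [] := by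
      simp [List.replicate_eq_nil_iff]; omega
    rw [glue_eq _ hrep]
    have hlast : (List.replicate c n).getLast hrep = n := by
      have := List.getLast_mem hrep
      exact List.eq_of_mem_replicate this
    rw [hlast, if_pos (hb y (by simp))]
    simp

lemma d_block (a b : List ℕ) (c n : ℕ) (hc : 1 ≤ c)
    (ha : ∀ x ∈ a, x < n) (hb : ∀ x ∈ b, x < n) :
    d (a ++ (List.replicate c n ++ b)) = d a + d b + (if b = [] then 0 else 1) := by
  rw [d_append a, d_append (List.replicate c n) b, d_replicate,
    glue_left_small a _ n ha (head?_replicate_append c n b hc),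
    glue_replicate_left c n b hc hb]
  ring

def DG (σ : List ℕ) : Finset ℕ :=
  insert σ.length
    (((Finset.range (σ.length - 1)).filter fun t => σ.getD (t + 1) 0 < σ.getD t 0).image (· + 1))

lemma mem_DG {σ : List ℕ} {p : ℕ} :
    p ∈ DG σ ↔ p = σ.length ∨ (1 ≤ p ∧ p < σ.length ∧ σ.getD p 0 < σ.getD (p - 1) 0) := by
  unfold DG
  simp only [Finset.mem_insert, Finset.mem_image, Finset.mem_filter, Finset.mem_range]
  constructor
  · rintro (h | ⟨t, ⟨ht, hd⟩, rfl⟩)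
    · exact Or.inl h
    · exact Or.inr ⟨by omega, by omega, by simpa using hd⟩
  · rintro (h | ⟨h1, h2, hd⟩)
    · exact Or.inl h
    · refine Or.inr ⟨p - 1, ⟨by omega, ?_⟩, by omega⟩
      have : p - 1 + 1 = p := by omega
      rw [this]; exact hd

lemma card_DG (σ : List ℕ) (hσ : σ ≠ []) : (DG σ).card = descents σ := by
  have hlen : 1 ≤ σ.length := List.length_pos_iff.mpr hσ
  unfold DG
  rw [Finset.card_insert_of_notMem, Finset.card_image_of_injective _ (add_left_injective 1),
    filter_card, descents_eq_d]
  · intro hmem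
    simp only [Finset.mem_image, Finset.mem_filter, Finset.mem_range] at hmem
    obtain ⟨t, ⟨ht, _⟩, hteq⟩ := hmem
    omega

lemma DG_subset (σ : List ℕ) : DG σ ⊆ Finset.range (σ.length + 1) := by
  intro p hp
  rw [Finset.mem_range]
  rcases mem_DG.mp hp with h | ⟨_, h, _⟩ <;> omega

lemma descents_block (a b : List ℕ) (c n : ℕ) (hc : 1 ≤ c)
    (ha : ∀ x ∈ a, x < n) (hb : ∀ x ∈ b, x < n) :
    descents (a ++ (List.replicate c n ++ b)) =
      descents (a ++ b) + (if a.length ∈ DG (a ++ b) then 0 else 1) := by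
  rw [descents_eq_d, descents_eq_d, d_block a b c n hc ha hb, d_append a b]
  by_cases hbe : b = []
  · subst hbe
    have hmem : a.length ∈ DG (a ++ []) := mem_DG.mpr (Or.inl (by simp))
    rw [if_pos hmem, glue_nil_right]
    simp [d]
  · have hkey : a.length ∈ DG (a ++ b) ↔ glue a b = 1 := by
      cases b with
      | nil => exact absurd rfl hbe
      | cons y b' =>
        cases a with
        | nil =>
          simp only [List.nil_append, List.length_nil]
          rw [mem_DG, glue_nil_left]
          constructor
          · rintro (h | ⟨h1, _, _⟩)
            · simp at h
            · omega
          · intro h; omega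
        | cons z a' =>
          set a := z :: a' with ha'
          have hane : a ≠ [] := by simp [ha']
          have hlen : 1 ≤ a.length := List.length_pos_iff.mpr hane
          rw [glue_eq a hane]
          have h1 : (a ++ y :: b').getD a.length 0 = y := by
            rw [List.getD_append_right _ _ _ _ le_rfl]
            simp
          have h2 : (a ++ y :: b').getD (a.length - 1) 0 = a.getLast hane := by
            rw [List.getD_append _ _ _ _ (by omega), List.getD_eq_getElem _ _ (by omega),
              List.getLast_eq_getElem]
          rw [mem_DG, h1, h2]
          have hne : a.length ≠ (a ++ y :: b').length := by simp
          constructor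
          · rintro (h | ⟨_, _, h⟩)
            · exact absurd h hne
            · simp [h]
          · intro h
            by_cases hyx : y < a.getLast hane
            · exact Or.inr ⟨hlen, by simp, hyx⟩
            · simp [hyx] at h
    by_cases hmem : a.length ∈ DG (a ++ b)
    · rw [hkey.mp hmem, if_pos hmem, if_neg hbe]
      omega
    · rcases glue_cases a b with h0 | h1
      · rw [h0, if_neg hmem, if_neg hbe]
        omega
      · exact absurd (hkey.mpr h1) hmem

end SP

namespace SP2
open SP

lemma stirling_delete (a b : List ℕ) (c n : ℕ)
    (hw : IsStirlingPerm (a ++ (List.replicate c n ++ b))) :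
    IsStirlingPerm (a ++ b) := by
  intro i s j his hsj hjl heq
  have hlen : (a ++ b).length = a.length + b.length := by simp
  have hwlen : (a ++ (List.replicate c n ++ b)).length = a.length + (c + b.length) := by simp
  set ι : ℕ → ℕ := fun t => if t < a.length then t else t + c with hι
  have key : ∀ t, t < (a ++ b).length →
      (a ++ (List.replicate c n ++ b)).getD (ι t) 0 = (a ++ b).getD t 0 := by
    intro t ht
    by_cases h : t < a.length
    · have hit : ι t = t := if_pos h
      rw [hit, List.getD_append _ _ _ _ h, List.getD_append _ _ _ _ h]
    · push_neg at h
      have hit : ι t = t + c := if_neg (not_lt.mpr h)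
      have e1 : (a ++ (List.replicate c n ++ b)).getD (t + c) 0
          = (List.replicate c n ++ b).getD (t + c - a.length) 0 :=
        List.getD_append_right _ _ _ _ (by omega)
      have e2 : (List.replicate c n ++ b).getD (t + c - a.length) 0
          = b.getD (t + c - a.length - c) 0 := by
        have := List.getD_append_right (List.replicate c n) b 0 (t + c - a.length)
          (by simp; omega)
        simpa using this
      have e3 : (a ++ b).getD t 0 = b.getD (t - a.length) 0 :=
        List.getD_append_right _ _ _ _ h
      rw [hit, e1, e2, e3]
      congr 1
      omega
  have hmono : ∀ u v, u < v → ι u < ι v := by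
    intro u v huv
    simp only [hι]
    split_ifs <;> omega
  have hbound : ι j < (a ++ (List.replicate c n ++ b)).length := by
    simp only [hι]
    rw [hwlen]
    rw [hlen] at hjl
    split_ifs <;> omega
  have h1 := key i (by omega)
  have h2 := key s (by omega)
  have h3 := key j hjl
  rw [← h1, ← h3] at heq
  rw [← h1, ← h2]
  exact hw (ι i) (ι s) (ι j) (hmono _ _ his) (hmono _ _ hsj) hbound heq

lemma stirling_insert (a b : List ℕ) (c n : ℕ)
    (ha : ∀ x ∈ a, x < n) (hb : ∀ x ∈ b, x < n)
    (hσ : IsStirlingPerm (a ++ b)) :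
    IsStirlingPerm (a ++ (List.replicate c n ++ b)) := by
  intro i s j his hsj hjl heq
  have hwlen : (a ++ (List.replicate c n ++ b)).length = a.length + (c + b.length) := by simp
  have hval_in : ∀ t, a.length ≤ t → t < a.length + c →
      (a ++ (List.replicate c n ++ b)).getD t 0 = n := by
    intro t h1 h2
    rw [List.getD_append_right _ _ _ _ h1, List.getD_append _ _ _ _ (by simp; omega),
      List.getD_eq_getElem _ _ (by simp; omega)]
    simp
  have hval_out : ∀ t, t < (a ++ (List.replicate c n ++ b)).length →
      (t < a.length ∨ a.length + c ≤ t) →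
      (a ++ (List.replicate c n ++ b)).getD t 0
        = (a ++ b).getD (if t < a.length then t else t - c) 0 ∧
      (a ++ (List.replicate c n ++ b)).getD t 0 < n := by
    intro t ht hto
    rcases hto with h | h
    · rw [if_pos h, List.getD_append _ _ _ _ h, List.getD_append _ _ _ _ h]
      refine ⟨rfl, ?_⟩
      rw [List.getD_eq_getElem _ _ h]
      exact ha _ (List.getElem_mem h)
    · have e1 : (a ++ (List.replicate c n ++ b)).getD t 0
          = b.getD (t - a.length - c) 0 := by
        rw [List.getD_append_right _ _ _ _ (by omega)]
        have := List.getD_append_right (List.replicate c n) b 0 (t - a.length)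
          (by simp; omega)
        simpa using this
      have e2 : (a ++ b).getD (t - c) 0 = b.getD (t - c - a.length) 0 :=
        List.getD_append_right _ _ _ _ (by omega)
      rw [if_neg (by omega), e1, e2]
      have hidx : t - a.length - c = t - c - a.length := by omega
      rw [hidx]
      refine ⟨rfl, ?_⟩
      rw [hwlen] at ht
      rw [List.getD_eq_getElem _ _ (by omega)]
      exact hb _ (List.getElem_mem (by omega))
  by_cases hi : a.length ≤ i ∧ i < a.length + c
  · have hwi := hval_in i hi.1 hi.2
    have hj : a.length ≤ j ∧ j < a.length + c := by
      by_contra hjb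
      have := (hval_out j hjl (by omega)).2
      omega
    have hs := hval_in s (by omega) (by omega)
    rw [hwi, hs]
  · have hio : i < a.length ∨ a.length + c ≤ i := by omega
    have hi' := hval_out i (by omega) hio
    have hj : j < a.length ∨ a.length + c ≤ j := by
      by_contra hjb
      have := hval_in j (by omega) (by omega)
      omega
    have hj' := hval_out j hjl hj
    by_cases hsb : a.length ≤ s ∧ s < a.length + c
    · have := hval_in s hsb.1 hsb.2
      rw [this]
      omega
    · have hso : s < a.length ∨ a.length + c ≤ s := by omega
      have hs' := hval_out s (by omega) hso
      rw [hi'.1, hs'.1]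
      rw [hwlen] at hjl
      refine hσ (if i < a.length then i else i - c) (if s < a.length then s else s - c)
        (if j < a.length then j else j - c) ?_ ?_ ?_ ?_
      · split_ifs <;> omega
      · split_ifs <;> omega
      · simp only [List.length_append]
        split_ifs <;> omega
      · rw [← hi'.1, ← hj'.1]
        exact heq

lemma block_decomp (w : List ℕ) (n c : ℕ) (hc : 1 ≤ c)
    (hcount : w.count n = c) (hmax : ∀ x ∈ w, x ≤ n) (hst : IsStirlingPerm w) :
    ∃ a b, w = a ++ (List.replicate c n ++ b) ∧ n ∉ a ∧ n ∉ b := by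
  classical
  set a := w.takeWhile (· ≠ n) with hadef
  set r := w.dropWhile (· ≠ n) with hrdef
  have hw : w = a ++ r := List.takeWhile_append_dropWhile.symm
  have hna : n ∉ a := fun hmem => by
    have := List.mem_takeWhile_imp hmem
    simp at this
  have hmemw : n ∈ w := List.count_pos_iff.mp (by omega)
  have hr_ne : r ≠ [] := by
    intro h
    rw [hw, h, List.append_nil] at hmemw
    exact hna hmemw
  have hrhead : r.head hr_ne = n :=
    not_not.mp (of_decide_eq_false
      (List.head_dropWhile_not (fun x => decide (x ≠ n)) (l := w) (by rw [← hrdef]; exact hr_ne)))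
  set r2 := r.takeWhile (· = n) with hr2def
  set b := r.dropWhile (· = n) with hbdef
  have hr : r = r2 ++ b := List.takeWhile_append_dropWhile.symm
  have hwr : w = a ++ (r2 ++ b) := by rw [hw, hr]
  have hr2rep : r2 = List.replicate r2.length n :=
    List.eq_replicate_of_mem fun x hx => by simpa using List.mem_takeWhile_imp hx
  have hr2ne : r2 ≠ [] := by
    obtain ⟨y, t, hyt⟩ := List.exists_cons_of_ne_nil hr_ne
    have hy' : r.head? = some y := by rw [hyt]; rfl
    rw [List.head?_eq_head hr_ne] at hy'
    have hy : y = n := by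
      have := Option.some_injective _ hy'
      rw [← this, hrhead]
    rw [hr2def, hyt, List.takeWhile_cons_of_pos (by simp [hy])]
    simp
  have hbhead : ∀ (hbne : b ≠ []), b.head hbne ≠ n := by
    intro hbne
    exact of_decide_eq_false
      (List.head_dropWhile_not (fun x => decide (x = n)) (l := r) (by rw [← hbdef]; exact hbne))
  clear_value a r r2 b
  clear hadef hrdef hr2def hbdef
  have hr2len : 1 ≤ r2.length := List.length_pos_iff.mpr hr2ne
  have hnb : n ∉ b := by
    intro hmem
    obtain ⟨u, hu, hbu⟩ := List.mem_iff_getElem.mp hmem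
    have hbne : b ≠ [] := List.ne_nil_of_mem hmem
    have hb0 : b.head hbne ≠ n := hbhead hbne
    have hu1 : 1 ≤ u := by
      rcases Nat.eq_zero_or_pos u with h0 | h
      · subst h0
        exact absurd ((List.getElem_zero (by omega)).symm.trans hbu) hb0
      · exact h
    have hwlen : w.length = a.length + (r2.length + b.length) := by simp [hwr]
    have hgi : w.getD a.length 0 = n := by
      rw [hwr, List.getD_append_right _ _ _ _ le_rfl, Nat.sub_self,
        List.getD_append _ _ _ _ (by omega), hr2rep,
        List.getD_eq_getElem _ _ (by simp only [List.length_replicate]; omega)]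
      simp
    have hgs : w.getD (a.length + r2.length) 0 = b.head hbne := by
      rw [hwr, List.getD_append_right _ _ _ _ (by omega)]
      have : a.length + r2.length - a.length = r2.length := by omega
      rw [this]
      have := List.getD_append_right r2 b 0 r2.length le_rfl
      rw [this, Nat.sub_self, List.getD_eq_getElem _ _ (by omega), List.getElem_zero]
    have hgj : w.getD (a.length + r2.length + u) 0 = n := by
      rw [hwr, List.getD_append_right _ _ _ _ (by omega)]
      have h1 : a.length + r2.length + u - a.length = r2.length + u := by omega
      rw [h1]
      have := List.getD_append_right r2 b 0 (r2.length + u) (by omega)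
      rw [this]
      have h2 : r2.length + u - r2.length = u := by omega
      rw [h2, List.getD_eq_getElem _ _ (by omega)]
      exact hbu
    have hst' := hst a.length (a.length + r2.length) (a.length + r2.length + u)
      (by omega) (by omega) (by omega) (hgi.trans hgj.symm)
    rw [hgi, hgs] at hst'
    have hble : b.head hbne ≤ n := hmax _ (by rw [hwr]; simp [List.head_mem hbne])
    exact hb0 (le_antisymm hble hst')
  have hcnt : r2.length = c := by
    have hsplit : w.count n = a.count n + (r2.count n + b.count n) := by
      rw [hwr]; simp [List.count_append]
    have ha0 : a.count n = 0 := List.count_eq_zero.mpr hna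
    have hb0 : b.count n = 0 := List.count_eq_zero.mpr hnb
    have hr2c : r2.count n = r2.length := by
      conv_lhs => rw [hr2rep]
      simp [List.count_replicate]
    omega
  refine ⟨a, b, ?_, hna, hnb⟩
  rw [hwr, ← hcnt, ← hr2rep]

lemma delList_eq (a b : List ℕ) (c n : ℕ) (hc : 1 ≤ c) (hna : n ∉ a) (hnb : n ∉ b) :
    (a ++ (List.replicate c n ++ b)).takeWhile (· ≠ n) = a ∧
    ((a ++ (List.replicate c n ++ b)).dropWhile (· ≠ n)).dropWhile (· = n) = b := by
  have hrep : ∀ c', (List.replicate c' n ++ b).dropWhile (· = n) = b := by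
    intro c'
    induction c' with
    | zero =>
      simp only [List.replicate_zero, List.nil_append]
      cases b with
      | nil => rfl
      | cons y b' =>
        rw [List.dropWhile_cons_of_neg]
        simp
        intro h
        exact hnb (by rw [← h]; exact List.mem_cons_self)
    | succ c' ih =>
      rw [List.replicate_succ, List.cons_append, List.dropWhile_cons_of_pos (by simp)]
      exact ih
  have hpa : ∀ x ∈ a, (fun z => decide (z ≠ n)) x = true := by
    intro x hx
    simp only [ne_eq, decide_eq_true_eq]
    intro hxn
    exact hna (hxn ▸ hx)
  constructor
  · rw [List.takeWhile_append_of_pos hpa]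
    cases c with
    | zero => omega
    | succ c' =>
      rw [List.replicate_succ, List.cons_append, List.takeWhile_cons_of_neg (by simp)]
      simp
  · rw [List.dropWhile_append_of_pos hpa]
    have hstay : (List.replicate c n ++ b).dropWhile (· ≠ n) = List.replicate c n ++ b := by
      cases c with
      | zero => omega
      | succ c' =>
        rw [List.replicate_succ, List.cons_append, List.dropWhile_cons_of_neg (by simp)]
    rw [hstay]
    exact hrep c

end SP2

namespace SP3
open SP SP2

lemma multisetOf_succ (k : ℕ → ℕ) (m : ℕ) :
    multisetOf k (m + 1) = multisetOf k m + Multiset.replicate (k m) (m + 1) := by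
  rw [multisetOf, multisetOf, Finset.sum_range_succ]

lemma mem_multisetOf {k : ℕ → ℕ} {n x : ℕ} (hx : x ∈ multisetOf k n) : 1 ≤ x ∧ x ≤ n := by
  rw [multisetOf, Multiset.mem_sum] at hx
  obtain ⟨i, hi, hxi⟩ := hx
  have := Multiset.eq_of_mem_replicate hxi
  rw [Finset.mem_range] at hi
  omega

lemma card_multisetOf (k : ℕ → ℕ) (n : ℕ) :
    Multiset.card (multisetOf k n) = bigK k n := by
  induction n with
  | zero => simp [multisetOf, bigK]
  | succ m ih =>
    rw [multisetOf_succ, bigK, Finset.sum_range_succ, Multiset.card_add, ih,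
      Multiset.card_replicate, bigK]

lemma count_multisetOf (k : ℕ → ℕ) (m : ℕ) :
    (multisetOf k (m + 1)).count (m + 1) = k m := by
  rw [multisetOf_succ, Multiset.count_add, Multiset.count_replicate, if_pos rfl,
    Multiset.count_eq_zero.mpr (fun h => by have := mem_multisetOf h; omega)]
  omega

def Sset (k : ℕ → ℕ) (n i : ℕ) : Set (List ℕ) :=
  {w | (↑w : Multiset ℕ) = multisetOf k n ∧ IsStirlingPerm w ∧ descents w = i}

lemma finite_Sset (k : ℕ → ℕ) (n i : ℕ) : (Sset k n i).Finite := by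
  apply Set.Finite.subset ((multisetOf k n).toList.permutations.toFinset.finite_toSet)
  intro w hw
  simp only [Finset.coe_sort_coe, List.coe_toFinset, Set.mem_setOf_eq, List.mem_permutations]
  rw [← Multiset.coe_eq_coe, Multiset.coe_toList]
  exact hw.1

lemma eulerianA_eq_card (k : ℕ → ℕ) (n i : ℕ) :
    eulerianA k n i = ((finite_Sset k n i).toFinset).card := by
  rw [eulerianA, ← Set.ncard_eq_toFinset_card (Sset k n i) (finite_Sset k n i),
    ← Nat.card_coe_set_eq]
  rfl

lemma mem_Sset_length {k : ℕ → ℕ} {n i : ℕ} {w : List ℕ} (hw : w ∈ Sset k n i) :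
    w.length = bigK k n := by
  have := congrArg Multiset.card hw.1
  rwa [Multiset.coe_card, card_multisetOf] at this

/-- part 1 -/
lemma partA (k : ℕ → ℕ) (n : ℕ) : eulerianA k n 0 = 0 := by
  rw [eulerianA]
  have : IsEmpty {w : List ℕ //
      (↑w : Multiset ℕ) = multisetOf k n ∧ IsStirlingPerm w ∧ descents w = 0} := by
    refine ⟨fun ⟨w, _, _, hd⟩ => ?_⟩
    rw [descents] at hd
    omega
  exact Nat.card_of_isEmpty

lemma stirling_replicate (c x : ℕ) : IsStirlingPerm (List.replicate c x) := by
  intro i s j his hsj hjl _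
  rw [List.length_replicate] at hjl
  have key : ∀ t, t < c → (List.replicate c x).getD t 0 = x := by
    intro t ht
    rw [List.getD_eq_getElem _ _ (by simpa using ht)]
    simp
  rw [key i (by omega), key s (by omega)]

lemma descents_replicate (c x : ℕ) (hc : 1 ≤ c) :
    descents (List.replicate c x) = 1 := by
  rw [descents]
  have : ∀ t ∈ Finset.range ((List.replicate c x).length - 1),
      ¬ ((List.replicate c x).getD (t + 1) 0 < (List.replicate c x).getD t 0) := by
    intro t ht
    rw [Finset.mem_range, List.length_replicate] at ht
    rw [List.getD_eq_getElem _ _ (by rw [List.length_replicate]; omega),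
      List.getD_eq_getElem _ _ (by rw [List.length_replicate]; omega)]
    simp
  rw [Finset.filter_false_of_mem this]
  simp

lemma eq_replicate_of_Sset {k : ℕ → ℕ} {i : ℕ} {w : List ℕ}
    (hw : (↑w : Multiset ℕ) = multisetOf k 1) : w = List.replicate (k 0) 1 := by
  have hM : multisetOf k 1 = Multiset.replicate (k 0) 1 := by
    rw [multisetOf, Finset.sum_range_one]
  rw [hM, ← Multiset.coe_replicate, Multiset.coe_eq_coe] at hw
  exact List.perm_replicate.mp hw

/-- part 3 -/
lemma partC (k : ℕ → ℕ) (hk0 : 1 ≤ k 0) : eulerianA k 1 1 = 1 := by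
  rw [eulerianA]
  have hrep : (↑(List.replicate (k 0) 1) : Multiset ℕ) = multisetOf k 1 := by
    rw [multisetOf, Finset.sum_range_one, Multiset.coe_replicate]
  have : Unique {w : List ℕ //
      (↑w : Multiset ℕ) = multisetOf k 1 ∧ IsStirlingPerm w ∧ descents w = 1} := by
    refine ⟨⟨⟨List.replicate (k 0) 1, hrep, stirling_replicate _ _,
      descents_replicate _ _ hk0⟩⟩, ?_⟩
    rintro ⟨w, hw, _, _⟩
    exact Subtype.ext (eq_replicate_of_Sset (i := 1) hw)
  exact Nat.card_unique

/-- descents bound -/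
lemma descents_le (k : ℕ → ℕ) (hk : ∀ i, 1 ≤ k i) :
    ∀ n, 1 ≤ n → ∀ w : List ℕ, (↑w : Multiset ℕ) = multisetOf k n →
      IsStirlingPerm w → descents w ≤ n := by
  intro n
  induction n with
  | zero => omega
  | succ m ih =>
    intro _ w hw hst
    rcases Nat.eq_zero_or_pos m with hm | hm
    · subst hm
      rw [eq_replicate_of_Sset (i := 0) hw, descents_replicate _ _ (hk 0)]
    · have hcount : w.count (m + 1) = k m := by
        rw [← Multiset.coe_count, hw, count_multisetOf]
      have hmax : ∀ x ∈ w, x ≤ m + 1 := by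
        intro x hx
        have : x ∈ multisetOf k (m + 1) := by rw [← hw]; exact hx
        exact (mem_multisetOf this).2
      obtain ⟨a, b, hab, hna, hnb⟩ :=
        block_decomp w (m + 1) (k m) (hk m) hcount hmax hst
      have hσ : (↑(a ++ b) : Multiset ℕ) = multisetOf k m := by
        have h1 : (↑w : Multiset ℕ) = (↑a + ↑b) + Multiset.replicate (k m) (m + 1) := by
          rw [hab, ← Multiset.coe_add, ← Multiset.coe_add, Multiset.coe_replicate]
          abel
        rw [hw, multisetOf_succ] at h1
        have := add_right_cancel h1.symm
        rw [← this, Multiset.coe_add]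
      have hlt : ∀ x ∈ a ++ b, x < m + 1 := by
        intro x hx
        have : x ∈ multisetOf k m := by rw [← hσ]; exact_mod_cast hx
        have := (mem_multisetOf this).2
        omega
      have hstσ : IsStirlingPerm (a ++ b) := by
        apply stirling_delete a b (k m) (m + 1)
        rw [← hab]
        exact hst
      have hdb := descents_block a b (k m) (m + 1) (hk m)
        (fun x hx => hlt x (List.mem_append_left _ hx))
        (fun x hx => hlt x (List.mem_append_right _ hx))
      have hle := ih hm (a ++ b) hσ hstσ
      rw [hab, hdb]
      split_ifs <;> omega

/-- part 2 -/
lemma partB (k : ℕ → ℕ) (hk : ∀ i, 1 ≤ k i) (n i : ℕ) (hn : 1 ≤ n) (hni : n < i) :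
    eulerianA k n i = 0 := by
  rw [eulerianA]
  have : IsEmpty {w : List ℕ //
      (↑w : Multiset ℕ) = multisetOf k n ∧ IsStirlingPerm w ∧ descents w = i} := by
    refine ⟨fun ⟨w, hw, hst, hd⟩ => ?_⟩
    have := descents_le k hk n hn w hw hst
    omega
  exact Nat.card_of_isEmpty

end SP3

namespace SP4
open SP SP2 SP3

lemma insert_props (k : ℕ → ℕ) (m : ℕ) (σ : List ℕ) (p : ℕ) (hkm : 1 ≤ k m)
    (hσM : (↑σ : Multiset ℕ) = multisetOf k m) (hst : IsStirlingPerm σ) (hp : p ≤ σ.length) :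
    (↑(σ.take p ++ (List.replicate (k m) (m + 1) ++ σ.drop p)) : Multiset ℕ)
        = multisetOf k (m + 1) ∧
    IsStirlingPerm (σ.take p ++ (List.replicate (k m) (m + 1) ++ σ.drop p)) ∧
    descents (σ.take p ++ (List.replicate (k m) (m + 1) ++ σ.drop p)) =
      descents σ + (if p ∈ DG σ then 0 else 1) := by
  have hlt : ∀ x ∈ σ, x < m + 1 := fun x hx => by
    have hxM : x ∈ multisetOf k m := by rw [← hσM]; exact_mod_cast hx
    have := (mem_multisetOf hxM).2
    omega
  have hta : ∀ x ∈ σ.take p, x < m + 1 := fun x hx => hlt x (List.take_subset _ _ hx)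
  have htb : ∀ x ∈ σ.drop p, x < m + 1 := fun x hx => hlt x (List.drop_subset _ _ hx)
  have htd : σ.take p ++ σ.drop p = σ := List.take_append_drop p σ
  refine ⟨?_, ?_, ?_⟩
  · rw [← Multiset.coe_add, ← Multiset.coe_add, Multiset.coe_replicate, multisetOf_succ, ← hσM]
    have hσsplit : (↑σ : Multiset ℕ) = ↑(σ.take p) + ↑(σ.drop p) := by
      rw [Multiset.coe_add, htd]
    rw [hσsplit]
    abel
  · exact stirling_insert (σ.take p) (σ.drop p) (k m) (m + 1) hta htb (by rw [htd]; exact hst)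
  · have hdb := descents_block (σ.take p) (σ.drop p) (k m) (m + 1) hkm hta htb
    rw [htd] at hdb
    rw [hdb, List.length_take, Nat.min_eq_left hp]

lemma fa_ga_eq (m : ℕ) (a b : List ℕ) (c : ℕ) (hc : 1 ≤ c)
    (hna : (m + 1) ∉ a) (hnb : (m + 1) ∉ b) :
    ((a ++ (List.replicate c (m + 1) ++ b)).takeWhile (· ≠ (m + 1)) ++
       (((a ++ (List.replicate c (m + 1) ++ b)).dropWhile (· ≠ (m + 1))).dropWhile
          (· = (m + 1))),
      ((a ++ (List.replicate c (m + 1) ++ b)).takeWhile (· ≠ (m + 1))).length)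
      = (a ++ b, a.length) := by
  obtain ⟨h1, h2⟩ := delList_eq a b c (m + 1) hc hna hnb
  rw [h1, h2]

lemma main_rec (k : ℕ → ℕ) (hk : ∀ j, 1 ≤ k j) (m i : ℕ) (hm : 1 ≤ m) (hi : 1 ≤ i) :
    eulerianA k (m + 1) i =
      i * eulerianA k m i + (bigK k m + 2 - i) * eulerianA k m (i - 1) := by
  classical
  have hK1 : m ≤ bigK k m := by
    have := Finset.sum_le_sum (fun j (_ : j ∈ Finset.range m) => hk j)
    simpa [bigK] using this
  set K' := bigK k m with hK'def
  set F : ℕ → Finset (List ℕ) := fun j => (finite_Sset k m j).toFinset with hFdef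
  set G : Finset (List ℕ) := (finite_Sset k (m + 1) i).toFinset with hGdef
  have hFmem : ∀ {j σ}, σ ∈ F j ↔
      ((↑σ : Multiset ℕ) = multisetOf k m ∧ IsStirlingPerm σ ∧ descents σ = j) := by
    intro j σ
    rw [hFdef]
    exact Set.Finite.mem_toFinset _
  have hGmem : ∀ {w}, w ∈ G ↔
      ((↑w : Multiset ℕ) = multisetOf k (m + 1) ∧ IsStirlingPerm w ∧ descents w = i) := by
    intro w
    rw [hGdef]
    exact Set.Finite.mem_toFinset _
  have hFlen : ∀ {j σ}, σ ∈ F j → σ.length = K' := by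
    intro j σ hσ
    have := congrArg Multiset.card (hFmem.mp hσ).1
    rwa [Multiset.coe_card, card_multisetOf] at this
  have hFne : ∀ {j σ}, σ ∈ F j → σ ≠ [] := by
    intro j σ hσ h
    have := hFlen hσ
    rw [h] at this
    simp at this
    omega
  set T : Finset (List ℕ × ℕ) :=
    (F i).biUnion (fun σ => {σ} ×ˢ DG σ) ∪
      (F (i - 1)).biUnion (fun σ => {σ} ×ˢ (Finset.range (K' + 1) \ DG σ)) with hTdef
  have hTmem : ∀ {x : List ℕ × ℕ}, x ∈ T ↔
      ((x.1 ∈ F i ∧ x.2 ∈ DG x.1) ∨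
        (x.1 ∈ F (i - 1) ∧ x.2 ∈ Finset.range (K' + 1) \ DG x.1)) := by
    intro x
    rw [hTdef]
    simp only [Finset.mem_union, Finset.mem_biUnion, Finset.mem_product, Finset.mem_singleton]
    constructor
    · rintro ((⟨σ, hσ, h1, h2⟩) | (⟨σ, hσ, h1, h2⟩))
      · exact Or.inl ⟨h1 ▸ hσ, h1 ▸ h2⟩
      · exact Or.inr ⟨h1 ▸ hσ, h1 ▸ h2⟩
    · rintro (⟨h1, h2⟩ | ⟨h1, h2⟩)
      · exact Or.inl ⟨x.1, h1, rfl, h2⟩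
      · exact Or.inr ⟨x.1, h1, rfl, h2⟩
  -- Step A : G.card = T.card
  have hdecomp : ∀ w ∈ G, ∃ a b, w = a ++ (List.replicate (k m) (m + 1) ++ b) ∧
      (m + 1) ∉ a ∧ (m + 1) ∉ b ∧ (↑(a ++ b) : Multiset ℕ) = multisetOf k m ∧
      IsStirlingPerm (a ++ b) ∧
      descents (a ++ b) + (if a.length ∈ DG (a ++ b) then 0 else 1) = i := by
    intro w hw
    obtain ⟨hwM, hwst, hwd⟩ := hGmem.mp hw
    have hcount : w.count (m + 1) = k m := by
      rw [← Multiset.coe_count, hwM, count_multisetOf]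
    have hmax : ∀ x ∈ w, x ≤ m + 1 := fun x hx =>
      (mem_multisetOf (show x ∈ multisetOf k (m + 1) by rw [← hwM]; exact_mod_cast hx)).2
    obtain ⟨a, b, hab, hna, hnb⟩ := block_decomp w (m + 1) (k m) (hk m) hcount hmax hwst
    have hσM : (↑(a ++ b) : Multiset ℕ) = multisetOf k m := by
      have h1 : (↑w : Multiset ℕ) = (↑a + ↑b) + Multiset.replicate (k m) (m + 1) := by
        rw [hab, ← Multiset.coe_add, ← Multiset.coe_add, Multiset.coe_replicate]
        abel
      rw [hwM, multisetOf_succ] at h1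
      have h2 := add_right_cancel h1.symm
      rw [← h2, Multiset.coe_add]
    have hltab : ∀ x ∈ a ++ b, x < m + 1 := fun x hx => by
      have hxM : x ∈ multisetOf k m := by rw [← hσM]; exact_mod_cast hx
      have := (mem_multisetOf hxM).2
      omega
    have hstab := stirling_delete a b (k m) (m + 1) (by rw [← hab]; exact hwst)
    have hdb := descents_block a b (k m) (m + 1) (hk m)
      (fun x hx => hltab x (List.mem_append_left _ hx))
      (fun x hx => hltab x (List.mem_append_right _ hx))
    rw [hab, hdb] at hwd
    exact ⟨a, b, hab, hna, hnb, hσM, hstab, hwd⟩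
  have hTfacts : ∀ x : List ℕ × ℕ, x ∈ T →
      (↑x.1 : Multiset ℕ) = multisetOf k m ∧ IsStirlingPerm x.1 ∧ x.2 ≤ x.1.length ∧
      descents x.1 + (if x.2 ∈ DG x.1 then 0 else 1) = i := by
    intro x hx
    rcases hTmem.mp hx with ⟨h1, h2⟩ | ⟨h1, h2⟩
    · obtain ⟨hσM, hσst, hσd⟩ := hFmem.mp h1
      refine ⟨hσM, hσst, ?_, ?_⟩
      · rcases mem_DG.mp h2 with h | ⟨_, h, _⟩ <;> omega
      · rw [if_pos h2, hσd]
        omega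
    · obtain ⟨hσM, hσst, hσd⟩ := hFmem.mp h1
      rw [Finset.mem_sdiff, Finset.mem_range] at h2
      have hlen := hFlen h1
      refine ⟨hσM, hσst, by omega, ?_⟩
      rw [if_neg h2.2, hσd]
      omega
  have hcardGT : G.card = T.card := by
    refine Finset.card_bij'
      (fun w _ => (w.takeWhile (· ≠ (m + 1)) ++
          ((w.dropWhile (· ≠ (m + 1))).dropWhile (· = (m + 1))),
        (w.takeWhile (· ≠ (m + 1))).length))
      (fun x _ => x.1.take x.2 ++ (List.replicate (k m) (m + 1) ++ x.1.drop x.2))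
      ?_ ?_ ?_ ?_
    · -- forward maps into T
      intro w hw
      obtain ⟨a, b, hab, hna, hnb, hσM, hstab, hwd⟩ := hdecomp w hw
      have hfa := fa_ga_eq m a b (k m) (hk m) hna hnb
      beta_reduce
      subst hab
      rw [hfa, hTmem]
      dsimp only
      have hablen : (a ++ b).length = K' := by
        have := congrArg Multiset.card hσM
        rwa [Multiset.coe_card, card_multisetOf] at this
      by_cases hmem : a.length ∈ DG (a ++ b)
      · rw [if_pos hmem] at hwd
        exact Or.inl ⟨hFmem.mpr ⟨hσM, hstab, by omega⟩, hmem⟩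
      · rw [if_neg hmem] at hwd
        refine Or.inr ⟨hFmem.mpr ⟨hσM, hstab, by omega⟩, ?_⟩
        rw [Finset.mem_sdiff, Finset.mem_range]
        have : a.length ≤ (a ++ b).length := by simp
        exact ⟨by omega, hmem⟩
    · -- backward maps into G
      intro x hx
      obtain ⟨hσM, hσst, hp, hd⟩ := hTfacts x hx
      obtain ⟨hM, hst2, hd2⟩ := insert_props k m x.1 x.2 (hk m) hσM hσst hp
      beta_reduce
      exact hGmem.mpr ⟨hM, hst2, by rw [hd2]; exact hd⟩
    · -- left inverse
      intro w hw
      obtain ⟨a, b, hab, hna, hnb, hσM, hstab, hwd⟩ := hdecomp w hw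
      have hfa := fa_ga_eq m a b (k m) (hk m) hna hnb
      beta_reduce
      subst hab
      rw [hfa]
      beta_reduce
      rw [List.take_left, List.drop_left]
    · -- right inverse
      intro x hx
      obtain ⟨hσM, hσst, hp, hd⟩ := hTfacts x hx
      have hnt : (m + 1) ∉ x.1.take x.2 := fun h => by
        have hxM : (m + 1) ∈ multisetOf k m := by
          rw [← hσM]
          exact_mod_cast List.take_subset _ _ h
        have := (mem_multisetOf hxM).2
        omega
      have hnd : (m + 1) ∉ x.1.drop x.2 := fun h => by
        have hxM : (m + 1) ∈ multisetOf k m := by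
          rw [← hσM]
          exact_mod_cast List.drop_subset _ _ h
        have := (mem_multisetOf hxM).2
        omega
      have hfa := fa_ga_eq m (x.1.take x.2) (x.1.drop x.2) (k m) (hk m) hnt hnd
      beta_reduce
      rw [hfa, List.take_append_drop, List.length_take, Nat.min_eq_left hp]
  -- Step B : T.card
  have hd1 : ∀ j, ∀ σ ∈ F j, ∀ τ ∈ F j, σ ≠ τ →
      Disjoint (({σ} : Finset (List ℕ)) ×ˢ DG σ) (({τ} : Finset (List ℕ)) ×ˢ DG τ) := by
    intro j σ _ τ _ hne
    rw [Finset.disjoint_left]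
    intro x hx1 hx2
    rw [Finset.mem_product, Finset.mem_singleton] at hx1 hx2
    exact hne (hx1.1.symm.trans hx2.1)
  have hd2 : ∀ σ ∈ F (i - 1), ∀ τ ∈ F (i - 1), σ ≠ τ →
      Disjoint (({σ} : Finset (List ℕ)) ×ˢ (Finset.range (K' + 1) \ DG σ))
        (({τ} : Finset (List ℕ)) ×ˢ (Finset.range (K' + 1) \ DG τ)) := by
    intro σ _ τ _ hne
    rw [Finset.disjoint_left]
    intro x hx1 hx2
    rw [Finset.mem_product, Finset.mem_singleton] at hx1 hx2
    exact hne (hx1.1.symm.trans hx2.1)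
  have hdisj : Disjoint ((F i).biUnion (fun σ => {σ} ×ˢ DG σ))
      ((F (i - 1)).biUnion (fun σ => {σ} ×ˢ (Finset.range (K' + 1) \ DG σ))) := by
    rw [Finset.disjoint_left]
    intro x hx1 hx2
    simp only [Finset.mem_biUnion, Finset.mem_product, Finset.mem_singleton] at hx1 hx2
    obtain ⟨σ, hσ, h1, _⟩ := hx1
    obtain ⟨τ, hτ, h2, _⟩ := hx2
    have hστ : σ = τ := h1.symm.trans h2
    have e1 := (hFmem.mp hσ).2.2
    have e2 := (hFmem.mp hτ).2.2
    rw [hστ] at e1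
    omega
  have hcard1 : ∀ σ ∈ F i, ((({σ} : Finset (List ℕ))) ×ˢ DG σ).card = i := by
    intro σ hσ
    rw [Finset.card_product, Finset.card_singleton, one_mul, card_DG σ (hFne hσ),
      (hFmem.mp hσ).2.2]
  have hcard2 : ∀ σ ∈ F (i - 1),
      ((({σ} : Finset (List ℕ))) ×ˢ (Finset.range (K' + 1) \ DG σ)).card = K' + 2 - i := by
    intro σ hσ
    have hsub : DG σ ⊆ Finset.range (K' + 1) := by
      have h := DG_subset σ
      rwa [hFlen hσ] at h
    rw [Finset.card_product, Finset.card_singleton, one_mul, Finset.card_sdiff_of_subset hsub,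
      Finset.card_range, card_DG σ (hFne hσ), (hFmem.mp hσ).2.2]
    omega
  have hcardT : T.card = i * (F i).card + (K' + 2 - i) * (F (i - 1)).card := by
    rw [hTdef, Finset.card_union_of_disjoint hdisj,
      Finset.card_biUnion (hd1 i), Finset.card_biUnion hd2,
      Finset.sum_congr rfl hcard1, Finset.sum_congr rfl hcard2,
      Finset.sum_const, Finset.sum_const, smul_eq_mul, smul_eq_mul]
    ring
  rw [eulerianA_eq_card k (m + 1) i, eulerianA_eq_card k m i, eulerianA_eq_card k m (i - 1)]
  have hGfix : (finite_Sset k (m + 1) i).toFinset = G := rfl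
  have hFfix1 : (finite_Sset k m i).toFinset = F i := rfl
  have hFfix2 : (finite_Sset k m (i - 1)).toFinset = F (i - 1) := rfl
  rw [hGfix, hFfix1, hFfix2, hcardGT, hcardT]

end SP4

/-- Recurrence for the Eulerian numbers of Stirling permutations:
A_{k,i} = i·A_{k∖k_n,i} + (k_1+...+k_{n-1}+2-i)·A_{k∖k_n,i-1}, with
A_{(k),1} = 1 and A_{k,i} = 0 if i = 0 or i > n. -/
theorem eulerianA_recurrence (k : ℕ → ℕ) (hk : ∀ i, 1 ≤ k i) :
    (∀ n, eulerianA k n 0 = 0) ∧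
    (∀ n i, 1 ≤ n → n < i → eulerianA k n i = 0) ∧
    (eulerianA k 1 1 = 1) ∧
    (∀ n i, 2 ≤ n → 1 ≤ i →
      (eulerianA k n i : ℤ) =
        (i : ℤ) * eulerianA k (n - 1) i +
          ((∑ j ∈ Finset.range (n - 1), (k j : ℤ)) + 2 - i) * eulerianA k (n - 1) (i - 1)) := by
  refine ⟨SP3.partA k, fun n i hn hni => SP3.partB k hk n i hn hni, SP3.partC k (hk 0), ?_⟩
  intro n i hn hi
  obtain ⟨m, rfl⟩ : ∃ m, n = m + 1 := ⟨n - 1, by omega⟩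
  have hm : 1 ≤ m := by omega
  simp only [Nat.add_sub_cancel]
  have hK : (∑ j ∈ Finset.range m, (k j : ℤ)) = ((bigK k m : ℕ) : ℤ) := by
    rw [bigK]
    push_cast
    rfl
  rw [hK]
  have hKm : m ≤ bigK k m := by
    have := Finset.sum_le_sum (fun j (_ : j ∈ Finset.range m) => hk j)
    simpa [bigK] using this
  by_cases hile : i ≤ bigK k m + 2
  · rw [SP4.main_rec k hk m i hm hi]
    push_cast [Nat.cast_sub hile]
    ring
  · push_neg at hile
    have h1 : eulerianA k (m + 1) i = 0 := SP3.partB k hk (m + 1) i (by omega) (by omega)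
    have h2 : eulerianA k m i = 0 := SP3.partB k hk m i hm (by omega)
    have h3 : eulerianA k m (i - 1) = 0 := SP3.partB k hk m (i - 1) hm (by omega)
    rw [h1, h2, h3]
    simp
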